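/- arXiv:1010.0561 — 2 statements merged into one kernel-verified Lean document; each statement's English description precedes it below -/
import Mathlib

section
/- The set G of homeomorphisms f of ℝ such that f - id and f⁻¹ - id belong to W^{1,∞}(ℝ) and f' - 1 belongs to L²(ℝ) forms a group under composition. -/
open MeasureTheory
open scoped ENNReal NNReal

lemma lipschitz_of_sub_id' {f : ℝ → ℝ} {K : NNReal}
    (h : LipschitzWith K (fun x => f x - x)) : LipschitzWith (K + 1) f := by
  have hf : f = (fun x => f x - x) + fun x => x := by funext x; simp
  rw [hf]
  exact h.add LipschitzWith.id

lemma abs_deriv_le_of_lipschitz {f : ℝ → ℝ} {K : NNReal} (h : LipschitzWith K f) (x : ℝ) :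
    |deriv f x| ≤ K := by
  have h2 : |deriv f x| = ‖fderiv ℝ f x 1‖ := by rw [Real.norm_eq_abs]; rfl
  rw [h2]
  calc ‖fderiv ℝ f x 1‖ ≤ ‖fderiv ℝ f x‖ * ‖(1:ℝ)‖ := (fderiv ℝ f x).le_opNorm 1
    _ = ‖fderiv ℝ f x‖ := by simp
    _ ≤ K := norm_fderiv_le_of_lipschitz ℝ h

lemma lipschitz_image_null' {f : ℝ → ℝ} {K : NNReal} (h : LipschitzWith K f)
    {s : Set ℝ} (hs : volume s = 0) : volume (f '' s) = 0 := by
  rw [← MeasureTheory.hausdorffMeasure_real] at hs ⊢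
  refine le_antisymm ?_ zero_le
  calc μH[1] (f '' s) ≤ (K : ℝ≥0∞) ^ (1:ℝ) * μH[1] s :=
        h.hausdorffMeasure_image_le zero_le_one s
    _ = 0 := by rw [hs, mul_zero]

lemma lemA (f : ℝ ≃ₜ ℝ) {K : NNReal} (hK : LipschitzWith K ⇑f) (H : ℝ → ℝ≥0∞) :
    ∫⁻ y, H y = ∫⁻ x, ENNReal.ofReal |deriv (⇑f) x| * H (f x) := by
  set s : Set ℝ := {x | DifferentiableAt ℝ (⇑f) x} with hs_def
  have hs : MeasurableSet s := measurableSet_of_differentiableAt ℝ _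
  have hsc : volume sᶜ = 0 := by
    have h := hK.ae_differentiableAt_of_real (μ := volume)
    rw [ae_iff] at h
    exact h
  have himgc : volume (⇑f '' s)ᶜ = 0 := by
    have himg_eq : (⇑f '' s)ᶜ = ⇑f '' sᶜ := (Set.image_compl_eq f.bijective).symm
    rw [himg_eq]
    exact lipschitz_image_null' hK hsc
  have himg_meas : MeasurableSet (⇑f '' s) := by
    have himg : ⇑f '' s = ⇑f.symm ⁻¹' s := by
      ext y
      constructor
      · rintro ⟨x, hx, rfl⟩
        simpa [f.symm_apply_apply] using hx
      · intro hy
        exact ⟨f.symm y, hy, f.apply_symm_apply y⟩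
    rw [himg]
    exact f.symm.continuous.measurable hs
  have hderiv : ∀ x ∈ s, HasFDerivWithinAt (⇑f)
      (ContinuousLinearMap.smulRight (1 : ℝ →L[ℝ] ℝ) (deriv (⇑f) x)) s x :=
    fun x hx => hx.hasDerivAt.hasDerivWithinAt.hasFDerivWithinAt
  have key := lintegral_image_eq_lintegral_abs_det_fderiv_mul volume hs hderiv
    (f.injective.injOn) H
  simp only [ContinuousLinearMap.det_smulRight, ContinuousLinearMap.one_apply, one_mul] at key
  have e1 : ∫⁻ y, H y = ∫⁻ y in ⇑f '' s, H y := by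
    rw [← lintegral_add_compl H himg_meas, setLIntegral_measure_zero _ _ himgc, add_zero]
  have e2 : ∫⁻ x, ENNReal.ofReal |deriv (⇑f) x| * H (f x)
      = ∫⁻ x in s, ENNReal.ofReal |deriv (⇑f) x| * H (f x) := by
    rw [← lintegral_add_compl (fun x => ENNReal.ofReal |deriv (⇑f) x| * H (f x)) hs,
      setLIntegral_measure_zero _ _ hsc, add_zero]
  rw [e1, e2, key]

lemma lemB (f : ℝ ≃ₜ ℝ) {K' : NNReal} (hK' : LipschitzWith K' ⇑f.symm) (H : ℝ → ℝ≥0∞) :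
    ∫⁻ x, H (f x) ≤ (K' : ℝ≥0∞) * ∫⁻ y, H y := by
  have h := lemA f.symm hK' (fun y => H (f y))
  simp only [Homeomorph.apply_symm_apply] at h
  rw [h]
  calc ∫⁻ x, ENNReal.ofReal |deriv (⇑f.symm) x| * H x
      ≤ ∫⁻ x, (K' : ℝ≥0∞) * H x := by
        refine lintegral_mono fun x => ?_
        gcongr
        calc ENNReal.ofReal |deriv (⇑f.symm) x| ≤ ENNReal.ofReal (K' : ℝ) :=
              ENNReal.ofReal_le_ofReal (abs_deriv_le_of_lipschitz hK' x)
          _ = (K' : ℝ≥0∞) := ENNReal.ofReal_coe_nnreal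
    _ = (K' : ℝ≥0∞) * ∫⁻ y, H y := lintegral_const_mul' _ _ ENNReal.coe_ne_top

lemma memLp_comp (f : ℝ ≃ₜ ℝ) {K' : NNReal} (hK' : LipschitzWith K' ⇑f.symm)
    {h : ℝ → ℝ} (hmeas : Measurable h) (hh : MemLp h 2 (volume : Measure ℝ)) :
    MemLp (fun x => h (f x)) 2 (volume : Measure ℝ) := by
  constructor
  · exact (hmeas.comp f.continuous.measurable).aestronglyMeasurable
  · rw [eLpNorm_eq_lintegral_rpow_enorm_toReal two_ne_zero ENNReal.ofNat_ne_top]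
    refine ENNReal.rpow_lt_top_of_nonneg (by positivity) ?_
    have hfin : ∫⁻ y, ‖h y‖ₑ ^ (2 : ℝ≥0∞).toReal ∂volume < ⊤ :=
      lintegral_rpow_enorm_lt_top_of_eLpNorm_lt_top two_ne_zero ENNReal.ofNat_ne_top hh.2
    have hle := lemB f hK' (fun y => ‖h y‖ₑ ^ (2 : ℝ≥0∞).toReal)
    exact ne_of_lt (lt_of_le_of_lt hle (ENNReal.mul_lt_top ENNReal.coe_lt_top hfin))

lemma memLp_deriv_trans (f g : ℝ ≃ₜ ℝ) {Kf Kf' Kg : NNReal}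
    (hKf : LipschitzWith Kf ⇑f) (hKf' : LipschitzWith Kf' ⇑f.symm)
    (hKg : LipschitzWith Kg ⇑g)
    (hfL2 : MemLp (fun x => deriv (⇑f) x - 1) 2 (volume : Measure ℝ))
    (hgL2 : MemLp (fun x => deriv (⇑g) x - 1) 2 (volume : Measure ℝ)) :
    MemLp (fun x => deriv (⇑(f.trans g)) x - 1) 2 (volume : Measure ℝ) := by
  have h1 : ∀ᵐ x : ℝ, DifferentiableAt ℝ (⇑f) x := hKf.ae_differentiableAt_of_real
  have h2 : ∀ᵐ x : ℝ, DifferentiableAt ℝ (⇑g) (f x) := by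
    rw [ae_iff]
    have hN : volume {y : ℝ | ¬ DifferentiableAt ℝ (⇑g) y} = 0 := by
      have h := hKg.ae_differentiableAt_of_real (μ := volume)
      rw [ae_iff] at h; exact h
    have hset : {x : ℝ | ¬ DifferentiableAt ℝ (⇑g) (f x)}
        = ⇑f.symm '' {y : ℝ | ¬ DifferentiableAt ℝ (⇑g) y} := by
      ext x
      constructor
      · intro hx
        exact ⟨f x, hx, f.symm_apply_apply x⟩
      · rintro ⟨y, hy, rfl⟩
        simpa [f.apply_symm_apply] using hy
    rw [hset]
    exact lipschitz_image_null' hKf' hN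
  have hae_eq : (fun x => deriv (⇑(f.trans g)) x - 1)
      =ᵐ[volume] (fun x => (deriv (⇑g) (f x) - 1) * deriv (⇑f) x + (deriv (⇑f) x - 1)) := by
    filter_upwards [h1, h2] with x hx1 hx2
    have hc : HasDerivAt (⇑g ∘ ⇑f) (deriv (⇑g) (f x) * deriv (⇑f) x) x :=
      HasDerivAt.comp x hx2.hasDerivAt hx1.hasDerivAt
    have hd : deriv (⇑(f.trans g)) x = deriv (⇑g) (f x) * deriv (⇑f) x := by
      exact hc.deriv
    rw [hd]; ring
  have base : MemLp (fun x => deriv (⇑g) (f x) - 1) 2 (volume : Measure ℝ) :=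
    memLp_comp f hKf' ((measurable_deriv _).sub measurable_const) hgL2
  have T1 : MemLp (fun x => (deriv (⇑g) (f x) - 1) * deriv (⇑f) x) 2 (volume : Measure ℝ) := by
    refine MemLp.of_le_mul (c := (Kf : ℝ)) base ?_ ?_
    · exact ((((measurable_deriv (⇑g)).comp f.continuous.measurable).sub
        measurable_const).mul (measurable_deriv _)).aestronglyMeasurable
    · refine Filter.Eventually.of_forall fun x => ?_
      rw [Real.norm_eq_abs, Real.norm_eq_abs, abs_mul]
      calc |deriv (⇑g) (f x) - 1| * |deriv (⇑f) x|
          ≤ |deriv (⇑g) (f x) - 1| * (Kf : ℝ) := by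
            gcongr
            exact abs_deriv_le_of_lipschitz hKf x
        _ = (Kf : ℝ) * |deriv (⇑g) (f x) - 1| := mul_comm _ _
  exact (T1.add hfL2).ae_eq hae_eq.symm

lemma memLp_deriv_symm (f : ℝ ≃ₜ ℝ) {Kf Kf' : NNReal}
    (hKf : LipschitzWith Kf ⇑f) (hKf' : LipschitzWith Kf' ⇑f.symm)
    (hfL2 : MemLp (fun x => deriv (⇑f) x - 1) 2 (volume : Measure ℝ)) :
    MemLp (fun y => deriv (⇑f.symm) y - 1) 2 (volume : Measure ℝ) := by
  have h1 : ∀ᵐ y : ℝ, DifferentiableAt ℝ (⇑f.symm) y := hKf'.ae_differentiableAt_of_real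
  have h2 : ∀ᵐ y : ℝ, DifferentiableAt ℝ (⇑f) (f.symm y) := by
    rw [ae_iff]
    have hN : volume {x : ℝ | ¬ DifferentiableAt ℝ (⇑f) x} = 0 := by
      have h := hKf.ae_differentiableAt_of_real (μ := volume)
      rw [ae_iff] at h; exact h
    have hset : {y : ℝ | ¬ DifferentiableAt ℝ (⇑f) (f.symm y)}
        = ⇑f '' {x : ℝ | ¬ DifferentiableAt ℝ (⇑f) x} := by
      ext y
      constructor
      · intro hy
        exact ⟨f.symm y, hy, f.apply_symm_apply y⟩
      · rintro ⟨x, hx, rfl⟩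
        simpa [f.symm_apply_apply] using hx
    rw [hset]
    exact lipschitz_image_null' hKf hN
  have hK'' : LipschitzWith Kf ⇑f.symm.symm := by simpa using hKf
  have base : MemLp (fun y => deriv (⇑f) (f.symm y) - 1) 2 (volume : Measure ℝ) :=
    memLp_comp f.symm hK'' ((measurable_deriv _).sub measurable_const) hfL2
  refine MemLp.of_le_mul (c := (Kf' : ℝ)) base
    (((measurable_deriv _).sub measurable_const).aestronglyMeasurable) ?_
  filter_upwards [h1, h2] with y hy1 hy2
  have hc : HasDerivAt (⇑f ∘ ⇑f.symm) (deriv (⇑f) (f.symm y) * deriv (⇑f.symm) y) y :=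
    HasDerivAt.comp y hy2.hasDerivAt hy1.hasDerivAt
  have hid : (⇑f ∘ ⇑f.symm) = id := by funext z; simp
  rw [hid] at hc
  have hmul : deriv (⇑f) (f.symm y) * deriv (⇑f.symm) y = 1 := hc.unique (hasDerivAt_id y)
  have heq : deriv (⇑f.symm) y - 1 = (1 - deriv (⇑f) (f.symm y)) * deriv (⇑f.symm) y := by
    linear_combination hmul
  rw [Real.norm_eq_abs, Real.norm_eq_abs, heq, abs_mul]
  calc |1 - deriv (⇑f) (f.symm y)| * |deriv (⇑f.symm) y|
      ≤ |1 - deriv (⇑f) (f.symm y)| * (Kf' : ℝ) := by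
        gcongr
        exact abs_deriv_le_of_lipschitz hKf' y
    _ = (Kf' : ℝ) * |deriv (⇑f) (f.symm y) - 1| := by rw [abs_sub_comm]; ring

/-- `g ∈ W^{1,∞}(ℝ)`: `g` is bounded and Lipschitz. -/
def MemW1infty (g : ℝ → ℝ) : Prop :=
  (∃ C : ℝ, ∀ x, |g x| ≤ C) ∧ ∃ K : NNReal, LipschitzWith K g

lemma memW1infty_comp {f g : ℝ → ℝ} (hf : MemW1infty (fun x => f x - x))
    (hg : MemW1infty (fun x => g x - x)) : MemW1infty (fun x => g (f x) - x) := by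
  obtain ⟨⟨Cf, hCf⟩, Kf, hKf⟩ := hf
  obtain ⟨⟨Cg, hCg⟩, Kg, hKg⟩ := hg
  constructor
  · refine ⟨Cg + Cf, fun x => ?_⟩
    calc |g (f x) - x| = |(g (f x) - f x) + (f x - x)| := by ring_nf
      _ ≤ |g (f x) - f x| + |f x - x| := abs_add_le _ _
      _ ≤ Cg + Cf := add_le_add (hCg (f x)) (hCf x)
  · refine ⟨Kg * (Kf + 1) + Kf, ?_⟩
    have h1 : LipschitzWith (Kf + 1) f := lipschitz_of_sub_id' hKf
    have h2 : LipschitzWith (Kg * (Kf + 1)) ((fun y => g y - y) ∘ f) := hKg.comp h1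
    have h3 : (fun x => g (f x) - x)
        = ((fun y => g y - y) ∘ f) + fun x => f x - x := by
      funext x; simp only [Pi.add_apply, Function.comp_apply]; ring
    rw [h3]
    exact h2.add hKf

/-- Membership in the relabeling set `G`: `f` is a homeomorphism of `ℝ` with
`f - id, f⁻¹ - id ∈ W^{1,∞}(ℝ)` and `f' - 1 ∈ L²(ℝ)`. -/
def InRelabelGroup (f : ℝ ≃ₜ ℝ) : Prop :=
  MemW1infty (fun x => f x - x) ∧ MemW1infty (fun x => f.symm x - x) ∧
  MemLp (fun x => deriv (⇑f) x - 1) 2 (volume : Measure ℝ)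

/-- The set `G` forms a group under composition: it contains the identity and
is closed under composition and inversion. -/
theorem stmt2 :
    InRelabelGroup (Homeomorph.refl ℝ) ∧
    (∀ f g : ℝ ≃ₜ ℝ, InRelabelGroup f → InRelabelGroup g →
      InRelabelGroup (f.trans g)) ∧
    (∀ f : ℝ ≃ₜ ℝ, InRelabelGroup f → InRelabelGroup f.symm) := by
  have hzero : MemW1infty (fun x : ℝ => x - x) := by
    have : (fun x : ℝ => x - x) = fun _ => (0:ℝ) := by funext x; ring
    rw [this]
    exact ⟨⟨0, fun x => by simp⟩, 0, LipschitzWith.const 0⟩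
  refine ⟨⟨?_, ?_, ?_⟩, ?_, ?_⟩
  · simpa using hzero
  · simpa using hzero
  · have hd : (fun x : ℝ => deriv (⇑(Homeomorph.refl ℝ)) x - 1) = fun _ => (0:ℝ) := by
      funext x
      simp [Homeomorph.coe_refl]
    rw [hd]
    exact MemLp.zero
  · rintro f g ⟨hf1, hf2, hf3⟩ ⟨hg1, hg2, hg3⟩
    obtain ⟨Kf0, hKf0⟩ := hf1.2
    obtain ⟨Kf0', hKf0'⟩ := hf2.2
    obtain ⟨Kg0, hKg0⟩ := hg1.2
    have hKf : LipschitzWith (Kf0 + 1) ⇑f := lipschitz_of_sub_id' hKf0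
    have hKf' : LipschitzWith (Kf0' + 1) ⇑f.symm := lipschitz_of_sub_id' hKf0'
    have hKg : LipschitzWith (Kg0 + 1) ⇑g := lipschitz_of_sub_id' hKg0
    refine ⟨?_, ?_, memLp_deriv_trans f g hKf hKf' hKg hf3 hg3⟩
    · have := memW1infty_comp hf1 hg1
      simpa [Homeomorph.trans_apply] using this
    · have := memW1infty_comp hg2 hf2
      have he : ∀ x : ℝ, (f.trans g).symm x = f.symm (g.symm x) := fun x => rfl
      simpa [he] using this
  · rintro f ⟨hf1, hf2, hf3⟩
    obtain ⟨Kf0, hKf0⟩ := hf1.2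
    obtain ⟨Kf0', hKf0'⟩ := hf2.2
    have hKf : LipschitzWith (Kf0 + 1) ⇑f := lipschitz_of_sub_id' hKf0
    have hKf' : LipschitzWith (Kf0' + 1) ⇑f.symm := lipschitz_of_sub_id' hKf0'
    refine ⟨hf2, ?_, memLp_deriv_symm f hKf hKf' hf3⟩
    simpa using hf1
end

section
/- Suppose the ODE system ζ_t = U, U_t = -Q, H_t = U³ - 2PU preserves the a.e. identity y_ξ H_ξ = y_ξ²U² + U_ξ², where y = ζ + id. If at time t, y_ξ(t,ξ), H_ξ(t,ξ) ≥ 0 and y_ξ(0,ξ) + H_ξ(0,ξ) ≥ 1/c for a.e. ξ, and the coefficients of the linearized system for (y_ξ, U_ξ, H_ξ) are bounded by a constant C on [0,T], then y_ξ(t,ξ) + H_ξ(t,ξ) ≥ (2/(3c)) e^{-CT} for all t ∈ [0,T] and a.e. ξ. Similarly if y_ξ(0) + H_ξ(0) ≤ c then y_ξ(t) + H_ξ(t) ≤ (3c/2) e^{CT}. -/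
open MeasureTheory

private lemma gron_fwd15 {E : Type*} [NormedAddCommGroup E] [NormedSpace ℝ E]
    (C : ℝ) (f f' : ℝ → E) (T : ℝ)
    (hf : ∀ t ∈ Set.Icc (0:ℝ) T, HasDerivAt f (f' t) t)
    (hb : ∀ t ∈ Set.Icc (0:ℝ) T, ‖f' t‖ ≤ C * ‖f t‖) :
    ∀ t ∈ Set.Icc (0:ℝ) T, ‖f t‖ ≤ Real.exp (C * t) * ‖f 0‖ := by
  intro t ht
  have hsub : Set.Icc (0:ℝ) t ⊆ Set.Icc 0 T := Set.Icc_subset_Icc le_rfl ht.2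
  have H := norm_le_gronwallBound_of_norm_deriv_right_le (f := f) (f' := f')
    (δ := ‖f 0‖) (K := C) (ε := 0) (a := 0) (b := t)
    (fun s hs => (hf s (hsub hs)).continuousAt.continuousWithinAt)
    (fun s hs => (hf s (hsub (Set.Ico_subset_Icc_self hs))).hasDerivWithinAt)
    le_rfl
    (fun s hs => by simpa using hb s (hsub (Set.Ico_subset_Icc_self hs)))
    t (Set.right_mem_Icc.2 ht.1)
  simpa [gronwallBound_ε0, mul_comm] using H

private lemma gron_bwd15 {E : Type*} [NormedAddCommGroup E] [NormedSpace ℝ E]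
    (C : ℝ) (f f' : ℝ → E) (T : ℝ)
    (hf : ∀ t ∈ Set.Icc (0:ℝ) T, HasDerivAt f (f' t) t)
    (hb : ∀ t ∈ Set.Icc (0:ℝ) T, ‖f' t‖ ≤ C * ‖f t‖) :
    ∀ t ∈ Set.Icc (0:ℝ) T, Real.exp (-(C * t)) * ‖f 0‖ ≤ ‖f t‖ := by
  intro t ht
  have hg : ∀ r ∈ Set.Icc (0:ℝ) t, HasDerivAt (fun r => f (t - r)) (-f' (t - r)) r := by
    intro r hr
    have hmem : t - r ∈ Set.Icc (0:ℝ) T := ⟨by linarith [hr.2], by linarith [hr.1, ht.2]⟩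
    have := HasDerivAt.scomp (𝕜 := ℝ) r (hf _ hmem) ((hasDerivAt_id r).const_sub t)
    simpa [Function.comp_def] using this
  have H := gron_fwd15 C (fun r => f (t - r)) (fun r => -f' (t - r)) t hg
    (fun r hr => by
      have hmem : t - r ∈ Set.Icc (0:ℝ) T := ⟨by linarith [hr.2], by linarith [hr.1, ht.2]⟩
      simpa using hb _ hmem)
    t (Set.right_mem_Icc.2 ht.1)
  simp only [sub_self, sub_zero] at H
  rw [Real.exp_neg, inv_mul_le_iff₀ (Real.exp_pos _)]
  exact H

private lemma key15 (T C : ℝ) (hC : 0 ≤ C) (A B U A' B' U' : ℝ → ℝ)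
    (h : ∀ t ∈ Set.Icc (0:ℝ) T, HasDerivAt A (A' t) t ∧ HasDerivAt B (B' t) t ∧
      HasDerivAt U (U' t) t ∧ 0 ≤ A t ∧ 0 ≤ B t ∧ (U t)^2 ≤ A t * B t ∧
      |A' t| + |B' t| + |U' t| ≤ C * (|A t| + |B t| + |U t|)) :
    ∀ t ∈ Set.Icc (0:ℝ) T,
      Real.exp (-(C * t)) * (A 0 + B 0) ≤ (3/2) * (A t + B t) ∧
      A t + B t ≤ Real.exp (C * t) * ((3/2) * (A 0 + B 0)) := by
  set e := PiLp.continuousLinearEquiv 1 ℝ (fun _ : Fin 3 => ℝ) with he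
  have hnorm : ∀ v : Fin 3 → ℝ, ‖e.symm v‖ = |v 0| + |v 1| + |v 2| := by
    intro v
    rw [PiLp.norm_eq_sum (by norm_num)]
    simp [Fin.sum_univ_three, Real.norm_eq_abs, Real.rpow_natCast]
    rfl
  set f : ℝ → PiLp 1 (fun _ : Fin 3 => ℝ) := fun t => e.symm ![A t, B t, U t] with hf
  set f' : ℝ → PiLp 1 (fun _ : Fin 3 => ℝ) := fun t => e.symm ![A' t, B' t, U' t] with hf'
  have hfn : ∀ t, ‖f t‖ = |A t| + |B t| + |U t| := by
    intro t; rw [hf]; rw [hnorm]; simp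
  have hf'n : ∀ t, ‖f' t‖ = |A' t| + |B' t| + |U' t| := by
    intro t; rw [hf']; rw [hnorm]; simp
  have hderiv : ∀ t ∈ Set.Icc (0:ℝ) T, HasDerivAt f (f' t) t := by
    intro t ht
    obtain ⟨hA, hB, hU, -⟩ := h t ht
    have hF : HasDerivAt (fun t => ![A t, B t, U t] : ℝ → Fin 3 → ℝ) ![A' t, B' t, U' t] t := by
      refine hasDerivAt_pi.2 fun i => ?_
      fin_cases i
      · exact hA
      · exact hB
      · exact hU
    exact (e.symm.toContinuousLinearMap.hasFDerivAt.comp_hasDerivAt t hF :)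
  have hbound : ∀ t ∈ Set.Icc (0:ℝ) T, ‖f' t‖ ≤ C * ‖f t‖ := by
    intro t ht
    rw [hf'n, hfn]
    exact (h t ht).2.2.2.2.2.2
  intro t ht
  have h0T : (0:ℝ) ∈ Set.Icc (0:ℝ) T := ⟨le_rfl, le_trans ht.1 ht.2⟩
  obtain ⟨-, -, -, hA0, hB0, hU0, -⟩ := h 0 h0T
  obtain ⟨-, -, -, hAt, hBt, hUt, -⟩ := h t ht
  have habsU0 : |U 0| ≤ (A 0 + B 0) / 2 := by
    nlinarith [sq_abs (U 0), abs_nonneg (U 0), sq_nonneg (A 0 - B 0),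
      sq_nonneg (|U 0| - (A 0 + B 0)/2)]
  have habsUt : |U t| ≤ (A t + B t) / 2 := by
    nlinarith [sq_abs (U t), abs_nonneg (U t), sq_nonneg (A t - B t),
      sq_nonneg (|U t| - (A t + B t)/2)]
  have hN0 : ‖f 0‖ = A 0 + B 0 + |U 0| := by
    rw [hfn, abs_of_nonneg hA0, abs_of_nonneg hB0]
  have hNt : ‖f t‖ = A t + B t + |U t| := by
    rw [hfn, abs_of_nonneg hAt, abs_of_nonneg hBt]
  constructor
  · have H := gron_bwd15 C f f' T hderiv hbound t ht
    rw [hN0, hNt] at H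
    have hep : (0:ℝ) < Real.exp (-(C * t)) := Real.exp_pos _
    have step : Real.exp (-(C * t)) * (A 0 + B 0)
        ≤ Real.exp (-(C * t)) * (A 0 + B 0 + |U 0|) :=
      mul_le_mul_of_nonneg_left (by linarith [abs_nonneg (U 0)]) hep.le
    linarith
  · have H := gron_fwd15 C f f' T hderiv hbound t ht
    rw [hN0, hNt] at H
    have hep : (0:ℝ) < Real.exp (C * t) := Real.exp_pos _
    nlinarith [abs_nonneg (U t)]

/-- Preservation of lower and upper bounds on `y_ξ + H_ξ` along the flow.
Write `a(t,ξ) = y_ξ(t,ξ)`, `b(t,ξ) = H_ξ(t,ξ)`, `u(t,ξ) = U_ξ(t,ξ)`.  The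
compatibility identity `y_ξ H_ξ = y_ξ²U² + U_ξ²` preserved by the flow yields
`u² ≤ a b`; assume moreover `a, b ≥ 0` and that the coefficients of the
linearized system are bounded by `C`, i.e.
`|a_t| + |b_t| + |u_t| ≤ C (|a| + |b| + |u|)` on `[0,T]`, for a.e. `ξ`.
If `a(0,ξ) + b(0,ξ) ≥ 1/c` then `a(t,ξ) + b(t,ξ) ≥ (2/(3c)) e^{-CT}` for all
`t ∈ [0,T]` and a.e. `ξ`; similarly if `a(0,ξ) + b(0,ξ) ≤ c` then
`a(t,ξ) + b(t,ξ) ≤ (3c/2) e^{CT}`. -/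
theorem stmt15 (T C c : ℝ) (hT : 0 ≤ T) (hC : 0 ≤ C) (hc : 0 < c)
    (a b u a' b' u' : ℝ → ℝ → ℝ)
    (h : ∀ᵐ ξ ∂(volume : Measure ℝ), ∀ t ∈ Set.Icc (0 : ℝ) T,
      HasDerivAt (fun s => a s ξ) (a' t ξ) t ∧
      HasDerivAt (fun s => b s ξ) (b' t ξ) t ∧
      HasDerivAt (fun s => u s ξ) (u' t ξ) t ∧
      0 ≤ a t ξ ∧ 0 ≤ b t ξ ∧ (u t ξ) ^ 2 ≤ a t ξ * b t ξ ∧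
      |a' t ξ| + |b' t ξ| + |u' t ξ| ≤
        C * (|a t ξ| + |b t ξ| + |u t ξ|)) :
    (∀ᵐ ξ ∂(volume : Measure ℝ), 1 / c ≤ a 0 ξ + b 0 ξ →
      ∀ t ∈ Set.Icc (0 : ℝ) T,
        (2 / (3 * c)) * Real.exp (-C * T) ≤ a t ξ + b t ξ) ∧
    (∀ᵐ ξ ∂(volume : Measure ℝ), a 0 ξ + b 0 ξ ≤ c →
      ∀ t ∈ Set.Icc (0 : ℝ) T,
        a t ξ + b t ξ ≤ (3 * c / 2) * Real.exp (C * T)) := by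
  constructor
  · filter_upwards [h] with ξ hξ h0 t ht
    have K := key15 T C hC (fun s => a s ξ) (fun s => b s ξ) (fun s => u s ξ)
      (fun s => a' s ξ) (fun s => b' s ξ) (fun s => u' s ξ) hξ t ht
    have L := K.1
    have e1 : Real.exp (-C * T) ≤ Real.exp (-(C * t)) := by
      apply Real.exp_le_exp.2
      have : C * t ≤ C * T := mul_le_mul_of_nonneg_left ht.2 hC
      linarith
    have F1 : Real.exp (-C * T) * (1/c) ≤ Real.exp (-(C * t)) * (1/c) :=
      mul_le_mul_of_nonneg_right e1 (by positivity)
    have F2 : Real.exp (-(C * t)) * (1/c) ≤ Real.exp (-(C * t)) * (a 0 ξ + b 0 ξ) :=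
      mul_le_mul_of_nonneg_left h0 (Real.exp_pos _).le
    have goal_eq : (2 / (3 * c)) * Real.exp (-C * T)
        = (2/3) * (Real.exp (-C * T) * (1/c)) := by ring
    rw [goal_eq]
    linarith
  · filter_upwards [h] with ξ hξ h0 t ht
    have K := key15 T C hC (fun s => a s ξ) (fun s => b s ξ) (fun s => u s ξ)
      (fun s => a' s ξ) (fun s => b' s ξ) (fun s => u' s ξ) hξ t ht
    have R := K.2
    have e2 : Real.exp (C * t) ≤ Real.exp (C * T) :=
      Real.exp_le_exp.2 (mul_le_mul_of_nonneg_left ht.2 hC)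
    have F2 : Real.exp (C * t) * ((3/2) * (a 0 ξ + b 0 ξ))
        ≤ Real.exp (C * t) * ((3/2) * c) :=
      mul_le_mul_of_nonneg_left (by linarith) (Real.exp_pos _).le
    have F3 : Real.exp (C * t) * ((3/2) * c) ≤ Real.exp (C * T) * ((3/2) * c) :=
      mul_le_mul_of_nonneg_right e2 (by positivity)
    have goal_eq : (3 * c / 2) * Real.exp (C * T)
        = Real.exp (C * T) * ((3/2) * c) := by ring
    rw [goal_eq]
    linarith
end
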